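/- For any three matrices A, B, C in SL(2,ℂ), one has tr(C·B·A) + tr(C·A·B) = tr(C)·tr(B·A) + tr(B)·tr(C·A) + tr(A)·tr(C·B) − tr(A)·tr(B)·tr(C). -/
import Mathlib


open Matrix

/-- For `A, B, C ∈ SL(2, ℂ)`,
`tr(CBA) + tr(CAB) = tr(C)tr(BA) + tr(B)tr(CA) + tr(A)tr(CB) − tr(A)tr(B)tr(C)`. -/
theorem trace_triple_relation (A B C : Matrix (Fin 2) (Fin 2) ℂ)
    (hA : A.det = 1) (hB : B.det = 1) (hC : C.det = 1) :
    (C * B * A).trace + (C * A * B).trace =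
      C.trace * (B * A).trace + B.trace * (C * A).trace + A.trace * (C * B).trace
        - A.trace * B.trace * C.trace := by
  simp only [Matrix.trace_fin_two, Matrix.mul_apply, Fin.sum_univ_two]
  ring
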